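/- arXiv:2501.18888 — 6 statements merged into one kernel-verified Lean document; each statement's English description precedes it below -/
import Mathlib

section
/- Suppose X and Y satisfy the PHR model with constant γ > 0 and there is M < ∞ with f(x) ≤ M for all x ≥ 0. Then for every t ≥ 0 with F̄(t) > 0, the weighted residual inaccuracy satisfies a₁ M² ≤ J^w(X,Y;t) ≤ 0, where a₁ = -(γ/(2 F̄(t)^{γ+1}))∫_t^∞ x F̄(x)^{γ−1} dx, assuming ∫_t^∞ x F̄(x)^{γ−1} dx is finite. -/
open MeasureTheory Set
open Filter Topology
open scoped ENNReal NNReal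

lemma phr_tail_integral (f : ℝ → ℝ) (hf_meas : Measurable f) (hf_nonneg : ∀ x, 0 ≤ f x)
    (hf_int : Integrable f) (γ : ℝ) (hγ : 0 < γ) (t : ℝ)
    (hc : 0 < ∫ x in Ioi t, f x) :
    ∫ x in Ioi t, γ * f x * (∫ y in Ioi x, f y) ^ (γ - 1)
      = (∫ y in Ioi t, f y) ^ γ := by
  set F : ℝ → ℝ := fun x => ∫ y in Ioi x, f y with hFdef
  set c : ℝ := F t with hcdef
  -- basic facts about F
  have hFnonneg : ∀ x, 0 ≤ F x := fun x =>
    setIntegral_nonneg measurableSet_Ioi fun y _ => hf_nonneg y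
  have hanti : Antitone F := fun a b hab =>
    setIntegral_mono_set hf_int.integrableOn
      (Filter.Eventually.of_forall fun y => hf_nonneg y)
      (HasSubset.Subset.eventuallyLE (Ioi_subset_Ioi hab))
  have hFmeas : Measurable F := hanti.measurable
  have hid : ∀ x, F x = c - ∫ y in t..x, f y := by
    intro x
    rcases le_total t x with h | h
    · rw [intervalIntegral.integral_of_le h, eq_sub_iff_add_eq, add_comm, hcdef]
      rw [← setIntegral_union (Ioc_disjoint_Ioi le_rfl) measurableSet_Ioi
        hf_int.integrableOn hf_int.integrableOn, Ioc_union_Ioi_eq_Ioi h]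
    · rw [intervalIntegral.integral_of_ge h, sub_neg_eq_add, hcdef, hFdef]
      simp only []
      rw [add_comm, ← setIntegral_union (Ioc_disjoint_Ioi le_rfl) measurableSet_Ioi
        hf_int.integrableOn hf_int.integrableOn, Ioc_union_Ioi_eq_Ioi h]
  have hcont : Continuous F := by
    have : Continuous fun x => c - ∫ y in t..x, f y :=
      continuous_const.sub (hf_int.continuous_primitive t)
    exact this.congr fun x => (hid x).symm
  have htend : Tendsto F atTop (𝓝 0) := by
    have h1 : Tendsto (fun x => c - ∫ y in t..x, f y) atTop (𝓝 (c - c)) :=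
      tendsto_const_nhds.sub
        (intervalIntegral_tendsto_integral_Ioi t hf_int.integrableOn tendsto_id)
    rw [sub_self] at h1
    exact h1.congr fun x => (hid x).symm
  -- the density measure
  set ν : Measure ℝ :=
    (volume.withDensity (fun x => ENNReal.ofReal (f x))).restrict (Ioi t) with hνdef
  have hwd_apply : ∀ s : Set ℝ, MeasurableSet s →
      volume.withDensity (fun x => ENNReal.ofReal (f x)) s
        = ENNReal.ofReal (∫ x in s, f x) := by
    intro s hs
    rw [withDensity_apply _ hs,
      ← ofReal_integral_eq_lintegral_ofReal hf_int.integrableOn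
        (Filter.Eventually.of_forall fun y => hf_nonneg y)]
  have hν_Ioi : ∀ a, t ≤ a → ν (Ioi a) = ENNReal.ofReal (F a) := by
    intro a ha
    rw [hνdef, Measure.restrict_apply measurableSet_Ioi,
      Ioi_inter_Ioi, max_eq_left ha, hwd_apply _ measurableSet_Ioi]
  have hνfin : IsFiniteMeasure ν := by
    constructor
    rw [hνdef, Measure.restrict_apply_univ, hwd_apply _ measurableSet_Ioi]
    exact ENNReal.ofReal_lt_top
  -- the pushforward of ν under F is Lebesgue on (0, c)
  have hmap : ν.map F = volume.restrict (Ioo 0 c) := by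
    refine Measure.ext_of_Iic _ _ (fun s => ?_)
    rw [Measure.map_apply hFmeas measurableSet_Iic,
      Measure.restrict_apply measurableSet_Iic,
      hνdef, Measure.restrict_apply (hFmeas measurableSet_Iic)]
    rcases le_or_gt c s with hsc | hsc
    · -- s ≥ c : full mass
      have h1 : F ⁻¹' Iic s ∩ Ioi t = Ioi t := by
        refine inter_eq_right.mpr fun x hx => ?_
        exact le_trans (hanti (le_of_lt hx)) hsc
      have h2 : Iic s ∩ Ioo 0 c = Ioo 0 c := by
        refine inter_eq_right.mpr fun y hy => le_trans (le_of_lt hy.2) hsc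
      rw [h1, h2, hwd_apply _ measurableSet_Ioi, Real.volume_Ioo, sub_zero]
    rcases lt_or_ge s 0 with hs0 | hs0
    · -- s < 0 : zero mass
      have h1 : F ⁻¹' Iic s ∩ Ioi t = ∅ := by
        refine eq_empty_of_forall_notMem fun x hx => ?_
        exact absurd (le_trans (hFnonneg x) hx.1) (not_le.mpr hs0)
      have h2 : Iic s ∩ Ioo 0 c = ∅ := by
        refine eq_empty_of_forall_notMem fun y hy => ?_
        exact absurd (lt_trans hy.2.1 (lt_of_le_of_lt hy.1 hs0)) (lt_irrefl 0)
      rw [h1, h2, measure_empty, measure_empty]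
    · -- 0 ≤ s < c
      have h2 : Iic s ∩ Ioo 0 c = Ioc 0 s := by
        ext y
        simp only [mem_inter_iff, mem_Iic, mem_Ioo, mem_Ioc]
        exact ⟨fun h => ⟨h.2.1, h.1⟩, fun h => ⟨h.2, h.1, lt_of_le_of_lt h.2 hsc⟩⟩
      rw [h2, Real.volume_Ioc, sub_zero]
      set S : Set ℝ := F ⁻¹' Iic s ∩ Ioi t with hSdef
      rcases eq_empty_or_nonempty S with hS | hS
      · -- S empty forces s ≤ 0, so both sides are 0
        rw [hS, measure_empty]
        have hs0' : s ≤ 0 := by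
          by_contra hpos
          push_neg at hpos
          obtain ⟨x, hx1, hx2⟩ :=
            ((htend.eventually (eventually_lt_nhds hpos)).and
              (eventually_gt_atTop t)).exists
          exact absurd hS (nonempty_iff_ne_empty.mp ⟨x, le_of_lt hx1, hx2⟩)
        rw [ENNReal.ofReal_eq_zero.mpr hs0']
      · -- S nonempty : measure is ofReal s
        set a : ℝ := sInf S with hadef
        have hbdd : BddBelow S := ⟨t, fun x hx => le_of_lt hx.2⟩
        have hta : t ≤ a := le_csInf hS fun x hx => le_of_lt hx.2
        have hFa_le : F a ≤ s := by
          refine le_of_tendsto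
            (hcont.continuousAt.tendsto.mono_left nhdsWithin_le_nhds :
              Tendsto F (𝓝[>] a) (𝓝 (F a))) ?_
          filter_upwards [self_mem_nhdsWithin] with b hb
          obtain ⟨x, hxS, hxb⟩ := (csInf_lt_iff hbdd hS).mp hb
          exact le_trans (hanti (le_of_lt hxb)) hxS.1
        have hat : t < a := by
          rcases eq_or_lt_of_le hta with h | h
          · have hcs : c ≤ s := by rw [hcdef, h]; exact hFa_le
            exact absurd (lt_of_le_of_lt hcs hsc) (lt_irrefl _)
          · exact h
        have hFa_ge : s ≤ F a := by
          refine ge_of_tendsto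
            (hcont.continuousAt.tendsto.mono_left nhdsWithin_le_nhds :
              Tendsto F (𝓝[<] a) (𝓝 (F a))) ?_
          filter_upwards [Ioo_mem_nhdsLT_of_mem ⟨hat, le_refl a⟩] with x hx
          by_contra hxs
          push_neg at hxs
          exact absurd (csInf_le hbdd ⟨le_of_lt hxs, hx.1⟩) (not_le.mpr hx.2)
        have hFa : F a = s := le_antisymm hFa_le hFa_ge
        have hIoiS : Ioi a ⊆ S := by
          intro x hx
          obtain ⟨x', hx'S, hx'x⟩ := (csInf_lt_iff hbdd hS).mp hx
          exact ⟨le_trans (hanti (le_of_lt hx'x)) hx'S.1, lt_trans hat hx⟩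
        have hSIci : S ⊆ Ici a := fun x hx => csInf_le hbdd hx
        have hwdIoi : volume.withDensity (fun x => ENNReal.ofReal (f x)) (Ioi a)
            = ENNReal.ofReal s := by
          rw [hwd_apply _ measurableSet_Ioi,
            show (∫ x in Ioi a, f x) = F a from rfl, hFa]
        refine le_antisymm ?_ ?_
        · refine le_trans (measure_mono hSIci) ?_
          have h3 : Ici a ⊆ Ioi a ∪ {a} := by
            intro x hx
            rcases eq_or_lt_of_le (mem_Ici.mp hx) with h | h
            · exact Or.inr (by simp [h.symm])
            · exact Or.inl h
          refine le_trans (measure_mono h3) ?_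
          refine le_trans (measure_union_le _ _) ?_
          rw [withDensity_absolutelyContinuous volume _ (measure_singleton a),
            add_zero, hwdIoi]
        · rw [← hwdIoi]
          exact measure_mono hIoiS
  -- now the change of variables
  have hg_meas' : Measurable fun y : ℝ => γ * y ^ (γ - 1) :=
    measurable_const.mul (measurable_id.pow measurable_const)
  have step1 : ∫ x in Ioi t, γ * f x * F x ^ (γ - 1)
      = ∫ x, γ * F x ^ (γ - 1) ∂ν := by
    rw [hνdef, restrict_withDensity measurableSet_Ioi]
    rw [show (fun x => ENNReal.ofReal (f x))
        = (fun x => ((f x).toNNReal : ℝ≥0∞)) from rfl]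
    rw [integral_withDensity_eq_integral_smul
      (hf_meas.real_toNNReal) (fun x => γ * F x ^ (γ - 1))]
    refine setIntegral_congr_fun measurableSet_Ioi fun x _ => ?_
    simp only [NNReal.smul_def, smul_eq_mul, Real.coe_toNNReal _ (hf_nonneg x)]
    ring
  have step2 : ∫ x, γ * F x ^ (γ - 1) ∂ν
      = ∫ y in Ioo 0 c, γ * y ^ (γ - 1) := by
    rw [← hmap, integral_map hFmeas.aemeasurable hg_meas'.aestronglyMeasurable]
  have step3 : ∫ y in Ioo 0 c, γ * y ^ (γ - 1) = c ^ γ := by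
    rw [← integral_Ioc_eq_integral_Ioo, ← intervalIntegral.integral_of_le hc.le]
    rw [intervalIntegral.integral_const_mul,
      integral_rpow (Or.inl (by linarith : (-1:ℝ) < γ - 1))]
    rw [sub_add_cancel, Real.zero_rpow (ne_of_gt hγ), sub_zero]
    field_simp
    rfl
  show ∫ x in Ioi t, γ * f x * F x ^ (γ - 1) = c ^ γ
  rw [step1, step2, step3]
/-- under the PHR model with a bounded density `f ≤ M`,
`a₁ M² ≤ J^w(X,Y;t) ≤ 0` with `a₁ = -(γ/(2F̄(t)^{γ+1}))∫_t^∞ x F̄(x)^{γ−1} dx`. -/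
theorem weighted_residual_inaccuracy_bounds_bounded_density
    (f g : ℝ → ℝ) (γ : ℝ) (hγ : 0 < γ) (M : ℝ)
    (hf_meas : Measurable f) (hg_meas : Measurable g)
    (hf_nonneg : ∀ x, 0 ≤ f x) (hg_nonneg : ∀ x, 0 ≤ g x)
    (hf_zero : ∀ x < 0, f x = 0) (hg_zero : ∀ x < 0, g x = 0)
    (hf_one : ∫ x, f x = 1) (hg_one : ∫ x, g x = 1)
    (hphr : ∀ x ≥ (0 : ℝ), g x = γ * f x * (∫ y in Ioi x, f y) ^ (γ - 1))
    (hM : ∀ x ≥ (0 : ℝ), f x ≤ M)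
    (t : ℝ) (ht : 0 ≤ t) (hF : 0 < ∫ x in Ioi t, f x)
    (hfin : IntegrableOn (fun x => x * (∫ y in Ioi x, f y) ^ (γ - 1)) (Ioi t)) :
    (-(γ / (2 * (∫ y in Ioi t, f y) ^ (γ + 1))) *
          ∫ x in Ioi t, x * (∫ y in Ioi x, f y) ^ (γ - 1)) * M ^ 2
        ≤ -(1 / 2) * ∫ x in Ioi t,
            x * f x * g x / ((∫ y in Ioi t, f y) * (∫ y in Ioi t, g y))
      ∧ -(1 / 2) * ∫ x in Ioi t,
            x * f x * g x / ((∫ y in Ioi t, f y) * (∫ y in Ioi t, g y)) ≤ 0 := by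
  have hf_int : Integrable f := by
    by_contra h
    rw [integral_undef h] at hf_one
    norm_num at hf_one
  set c : ℝ := ∫ y in Ioi t, f y with hcdef
  set G : ℝ := ∫ y in Ioi t, g y with hGdef
  have hG : G = c ^ γ := by
    rw [hGdef, hcdef, ← phr_tail_integral f hf_meas hf_nonneg hf_int γ hγ t hF]
    refine setIntegral_congr_fun measurableSet_Ioi fun x hx => ?_
    exact hphr x (le_trans ht (le_of_lt hx))
  have hM0 : 0 ≤ M := le_trans (hf_nonneg 0) (hM 0 le_rfl)
  have hG0 : 0 ≤ G := setIntegral_nonneg measurableSet_Ioi fun x _ => hg_nonneg x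
  have hcγ1 : 0 < c ^ (γ + 1) := Real.rpow_pos_of_pos hF _
  have hcG : c * G = c ^ (γ + 1) := by
    rw [hG, Real.rpow_add hF, Real.rpow_one, mul_comm]
  -- nonnegativity of the main integral
  have hI0 : 0 ≤ ∫ x in Ioi t, x * f x * g x / (c * G) := by
    refine setIntegral_nonneg measurableSet_Ioi fun x hx => ?_
    have hx0 : (0:ℝ) ≤ x := le_trans ht (le_of_lt hx)
    exact div_nonneg (mul_nonneg (mul_nonneg hx0 (hf_nonneg x)) (hg_nonneg x))
      (mul_nonneg (le_of_lt hF) hG0)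
  constructor
  · -- lower bound
    have hmono : ∫ x in Ioi t, x * f x * g x / (c * G)
        ≤ ∫ x in Ioi t, (γ * M ^ 2 / c ^ (γ + 1)) *
            (x * (∫ y in Ioi x, f y) ^ (γ - 1)) := by
      refine integral_mono_of_nonneg ?_ (hfin.const_mul _) ?_
      · refine (ae_restrict_iff' measurableSet_Ioi).mpr
          (Filter.Eventually.of_forall fun x hx => ?_)
        have hx0 : (0:ℝ) ≤ x := le_trans ht (le_of_lt hx)
        exact div_nonneg (mul_nonneg (mul_nonneg hx0 (hf_nonneg x)) (hg_nonneg x))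
          (mul_nonneg (le_of_lt hF) hG0)
      · refine (ae_restrict_iff' measurableSet_Ioi).mpr
          (Filter.Eventually.of_forall fun x hx => ?_)
        have hx0 : (0:ℝ) ≤ x := le_trans ht (le_of_lt hx)
        have hP : (0:ℝ) ≤ (∫ y in Ioi x, f y) ^ (γ - 1) :=
          Real.rpow_nonneg (setIntegral_nonneg measurableSet_Ioi
            fun y _ => hf_nonneg y) _
        set P : ℝ := (∫ y in Ioi x, f y) ^ (γ - 1)
        have hgx : g x = γ * f x * P := hphr x hx0
        show x * f x * g x / (c * G) ≤ γ * M ^ 2 / c ^ (γ + 1) * (x * P)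
        rw [hgx, hcG, div_le_iff₀ hcγ1]
        have hfx : 0 ≤ f x := hf_nonneg x
        have hfM : f x ≤ M := hM x hx0
        have key : x * f x * (γ * f x * P) ≤ γ * M ^ 2 * (x * P) := by
          nlinarith [mul_nonneg (mul_nonneg hx0 hP) (mul_nonneg hfx hfx),
            mul_nonneg (mul_nonneg hx0 hP)
              (mul_nonneg (sub_nonneg.mpr hfM) (add_nonneg hfx hM0)),
            mul_nonneg (mul_nonneg (le_of_lt hγ) (mul_nonneg hx0 hP))
              (mul_nonneg (sub_nonneg.mpr hfM) (add_nonneg hfx hM0))]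
        calc x * f x * (γ * f x * P) ≤ γ * M ^ 2 * (x * P) := key
          _ = γ * M ^ 2 / c ^ (γ + 1) * (x * P) * c ^ (γ + 1) := by
              field_simp
    rw [integral_const_mul] at hmono
    set K : ℝ := ∫ x in Ioi t, x * (∫ y in Ioi x, f y) ^ (γ - 1)
    have hrearr : (-(γ / (2 * c ^ (γ + 1))) * K) * M ^ 2
        = -(1/2) * (γ * M ^ 2 / c ^ (γ + 1) * K) := by
      field_simp
    rw [hrearr]
    linarith
  · linarith
end

section
/- Suppose X is uniformly distributed on (c,d) with 0 ≤ c < d, i.e. f(x) = 1/(d−c) for c < x < d and f = 0 otherwise, and X and Y satisfy the PHR model with constant γ > 0, so that g(x) = γ(d−x)^{γ−1}/(d−c)^γ on (c,d). Then for every t with c ≤ t < d, J^w(X,Y;t) = (γt + d)/(2(γ+1)(t−d)). -/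
open MeasureTheory Set

lemma int_rpow_sub_aux (d γ t : ℝ) (hγ : -1 < γ - 1) :
    ∫ x in t..d, (d - x) ^ (γ - 1) = (d - t) ^ (γ - 1 + 1) / (γ - 1 + 1) := by
  rw [intervalIntegral.integral_comp_sub_left (fun u => u ^ (γ - 1)) d]
  rw [integral_rpow (Or.inl hγ), sub_self, Real.zero_rpow (by linarith)]
  ring

lemma int_rpow_sub (d γ t : ℝ) (hγ : 0 < γ) :
    ∫ x in t..d, (d - x) ^ (γ - 1) = (d - t) ^ γ / γ := by
  have := int_rpow_sub_aux d γ t (by linarith)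
  simpa using this

lemma int_rpow_sub' (d γ t : ℝ) (hγ : 0 < γ) :
    ∫ x in t..d, (d - x) ^ γ = (d - t) ^ (γ + 1) / (γ + 1) := by
  have := int_rpow_sub_aux d (γ + 1) t (by linarith)
  simpa using this

lemma intable1 (d γ t : ℝ) (hγ : 0 < γ) :
    IntervalIntegrable (fun x => (d - x) ^ (γ - 1)) volume t d := by
  have := (intervalIntegral.intervalIntegrable_rpow' (a := d - t) (b := d - d)
    (r := γ - 1) (by linarith)).comp_sub_left d
  simpa using this

lemma int_x_rpow_sub (d γ t : ℝ) (htd : t ≤ d) (hγ : 0 < γ) :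
    ∫ x in t..d, x * (d - x) ^ (γ - 1)
      = d * ((d - t) ^ γ / γ) - (d - t) ^ (γ + 1) / (γ + 1) := by
  have hcg : ∀ x ∈ Set.uIcc t d, x * (d - x) ^ (γ - 1)
      = d * (d - x) ^ (γ - 1) - (d - x) ^ γ := by
    intro x hx
    rw [Set.uIcc_of_le htd] at hx
    have h0 : 0 ≤ d - x := by linarith [hx.2]
    rcases eq_or_lt_of_le h0 with h | h
    · have hxd : x = d := by linarith
      subst hxd
      simp [Real.zero_rpow hγ.ne']
    · have hadd : (d - x) ^ ((1 : ℝ) + (γ - 1)) = (d - x) ^ (1:ℝ) * (d - x) ^ (γ - 1) :=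
        Real.rpow_add h 1 (γ - 1)
      rw [Real.rpow_one] at hadd
      have h1 : (1 : ℝ) + (γ - 1) = γ := by ring
      rw [h1] at hadd
      rw [hadd]; ring
  rw [intervalIntegral.integral_congr hcg]
  have i1 := intable1 d γ t hγ
  have i2 : IntervalIntegrable (fun x => (d - x) ^ γ) volume t d := by
    have := (intervalIntegral.intervalIntegrable_rpow' (a := d - t) (b := d - d)
      (r := γ) (by linarith)).comp_sub_left d
    simpa using this
  rw [intervalIntegral.integral_sub (i1.const_mul d) i2,
    intervalIntegral.integral_const_mul, int_rpow_sub d γ t hγ, int_rpow_sub' d γ t hγ]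

/-- for `X` uniform on `(c,d)` and `Y` its PHR companion
with constant `γ`, `J^w(X,Y;t) = (γt + d)/(2(γ+1)(t−d))` for `c ≤ t < d`. -/
theorem weighted_residual_inaccuracy_uniform_phr
    (c d γ t : ℝ) (hc : 0 ≤ c) (hcd : c < d) (hγ : 0 < γ)
    (ht : c ≤ t) (htd : t < d)
    (f g : ℝ → ℝ)
    (hf : ∀ x, f x = if x ∈ Ioo c d then 1 / (d - c) else 0)
    (hg : ∀ x, g x = if x ∈ Ioo c d then γ * (d - x) ^ (γ - 1) / (d - c) ^ γ else 0) :
    -(1 / 2) * ∫ x in Ioi t,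
        x * f x * g x / ((∫ y in Ioi t, f y) * (∫ y in Ioi t, g y))
      = (γ * t + d) / (2 * (γ + 1) * (t - d)) := by
  have hs : 0 < d - t := by linarith
  have he : 0 < d - c := by linarith
  have hP : (0:ℝ) < (d - t) ^ γ := Real.rpow_pos_of_pos hs γ
  have hQ : (0:ℝ) < (d - c) ^ γ := Real.rpow_pos_of_pos he γ
  -- generic conversion: for any φ, integral over Ioi t of (if x ∈ Ioo c d then φ x else 0)
  have conv : ∀ φ : ℝ → ℝ, (∫ x in Ioi t, if x ∈ Ioo c d then φ x else 0)
      = ∫ x in Ioo t d, φ x := by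
    intro φ
    have h1 : ∀ x ∈ Ioi t, (if x ∈ Ioo c d then φ x else 0)
        = (Ioo t d).indicator φ x := by
      intro x hx
      simp only [mem_Ioi] at hx
      by_cases h : x < d
      · rw [if_pos (mem_Ioo.mpr ⟨lt_of_le_of_lt ht hx, h⟩), indicator_of_mem (mem_Ioo.mpr ⟨hx, h⟩)]
      · rw [if_neg (by intro hm; exact h hm.2),
          indicator_of_notMem (by intro hm; exact h hm.2)]
    rw [setIntegral_congr_fun measurableSet_Ioi h1,
      setIntegral_indicator measurableSet_Ioo,
      inter_eq_self_of_subset_right Ioo_subset_Ioi_self]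
  have hA : (∫ y in Ioi t, f y) = (d - t) / (d - c) := by
    simp_rw [hf]
    rw [conv]
    simp [Real.volume_Ioo, ENNReal.toReal_ofReal hs.le]
    rw [max_eq_left hs.le]
    ring
  have hB : (∫ y in Ioi t, g y) = (d - t) ^ γ / (d - c) ^ γ := by
    simp_rw [hg]
    rw [conv, ← integral_Ioc_eq_integral_Ioo,
      ← intervalIntegral.integral_of_le htd.le]
    have hφ : ∀ x : ℝ, γ * (d - x) ^ (γ - 1) / (d - c) ^ γ
        = (γ / (d - c) ^ γ) * (d - x) ^ (γ - 1) := fun x => by ring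
    simp_rw [hφ]
    rw [intervalIntegral.integral_const_mul, int_rpow_sub d γ t hγ]
    field_simp
  have hN : (∫ x in Ioi t, x * f x * g x)
      = (γ / ((d - c) * (d - c) ^ γ)) *
        (d * ((d - t) ^ γ / γ) - (d - t) ^ (γ + 1) / (γ + 1)) := by
    have hfg : ∀ x : ℝ, x * f x * g x
        = if x ∈ Ioo c d then (γ / ((d - c) * (d - c) ^ γ)) * (x * (d - x) ^ (γ - 1)) else 0 := by
      intro x
      rw [hf, hg]
      by_cases h : x ∈ Ioo c d
      · rw [if_pos h, if_pos h, if_pos h]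
        field_simp
      · rw [if_neg h, if_neg h, if_neg h]
        ring
    simp_rw [hfg]
    rw [conv, ← integral_Ioc_eq_integral_Ioo,
      ← intervalIntegral.integral_of_le htd.le,
      intervalIntegral.integral_const_mul, int_x_rpow_sub d γ t htd.le hγ]
  rw [hA, hB]
  rw [MeasureTheory.integral_div, hN]
  have hPs : (d - t) ^ (γ + 1) = (d - t) ^ γ * (d - t) := by
    rw [Real.rpow_add hs, Real.rpow_one]
  rw [hPs]
  have h1 : (γ : ℝ) + 1 ≠ 0 := by linarith
  have h2 : t - d ≠ 0 := by linarith
  field_simp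
  ring
end

section
/- Suppose X and Y satisfy the PHR model with constant γ > 0 and F̄(x) > 0 for all x ≥ 0. Then for every t ≥ 0, assuming ∫_t^∞ x λ_F(x)² dx is finite, the weighted residual inaccuracy satisfies the lower bound J^w(X,Y;t) ≥ -(γ/2)∫_t^∞ x λ_F(x)² dx, where λ_F(x) = f(x)/F̄(x) is the hazard rate of X. -/
open MeasureTheory Set

-- survival function lower bound under PHR
lemma survival_rpow_le (f g : ℝ → ℝ) (γ : ℝ) (hγ : 0 < γ)
    (hf_meas : Measurable f)
    (hf_nonneg : ∀ x, 0 ≤ f x) (hg_nonneg : ∀ x, 0 ≤ g x)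
    (hf_zero : ∀ x < 0, f x = 0) (hg_zero : ∀ x < 0, g x = 0)
    (hf_one : ∫ x, f x = 1) (hg_one : ∫ x, g x = 1)
    (hFpos : ∀ x ≥ (0 : ℝ), 0 < ∫ y in Ioi x, f y)
    (hphr : ∀ x ≥ (0 : ℝ), g x = γ * f x * (∫ y in Ioi x, f y) ^ (γ - 1))
    (t : ℝ) (ht : 0 ≤ t) :
    (∫ y in Ioi t, f y) ^ γ ≤ ∫ y in Ioi t, g y := by
  have hf_int : Integrable f := by
    by_contra h; rw [integral_undef h] at hf_one; norm_num at hf_one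
  have hg_int : Integrable g := by
    by_contra h; rw [integral_undef h] at hg_one; norm_num at hg_one
  set F : ℝ → ℝ := fun x => ∫ y in Ioi x, f y with hFdef
  set D : ℝ → ℝ := fun x => ∫ y in Iic x, f y with hDdef
  have hFD : ∀ x, F x = 1 - D x := by
    intro x
    have := intervalIntegral.integral_Iic_add_Ioi (μ := volume) (b := x) hf_int.integrableOn hf_int.integrableOn
    rw [hf_one] at this
    simp only [hFdef, hDdef]; linarith
  have hD_mono : Monotone D := by
    intro a b hab
    exact setIntegral_mono_set hf_int.integrableOn (ae_of_all _ hf_nonneg)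
      (HasSubset.Subset.eventuallyLE (Iic_subset_Iic.2 hab))
  have hD_cont : Continuous D := by
    have : D = fun b => D 0 + ∫ x in (0:ℝ)..b, f x := by
      funext b
      have := intervalIntegral.integral_Iic_sub_Iic (μ := volume) (a := (0:ℝ)) (b := b)
        hf_int.integrableOn hf_int.integrableOn
      simp only [hDdef]; linarith
    rw [this]
    exact continuous_const.add (hf_int.continuous_primitive 0)
  have hF_anti : Antitone F := by
    intro a b hab
    exact setIntegral_mono_set hf_int.integrableOn (ae_of_all _ hf_nonneg)
      (HasSubset.Subset.eventuallyLE (Ioi_subset_Ioi hab))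
  have hF_nonneg : ∀ x, 0 ≤ F x := fun x =>
    setIntegral_nonneg measurableSet_Ioi fun y _ => hf_nonneg y
  have hne0 : ∀ᵐ x : ℝ, x ≠ 0 := by
    rw [ae_iff]
    simpa [Set.setOf_eq_eq_singleton] using Real.volume_singleton (a := (0:ℝ))
  have hD0 : D 0 = 0 := by
    apply setIntegral_eq_zero_of_ae_eq_zero
    filter_upwards [hne0] with x hx hxle
    exact hf_zero x (lt_of_le_of_ne hxle hx)
  have hG0 : (∫ y in Iic (0:ℝ), g y) = 0 := by
    apply setIntegral_eq_zero_of_ae_eq_zero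
    filter_upwards [hne0] with x hx hxle
    exact hg_zero x (lt_of_le_of_ne hxle hx)
  have hF0 : F 0 = 1 := by rw [hFD 0, hD0]; ring
  -- Stieltjes function for D, giving the a.e. derivative of D
  let DS : StieltjesFunction ℝ :=
    ⟨D, hD_mono, fun x => hD_cont.continuousAt.continuousWithinAt⟩
  have hDSm : DS.measure = volume.withDensity (fun x => ENNReal.ofReal (f x)) := by
    refine Measure.ext_of_Ioc' _ _ (fun a b hab => ?_) (fun a b hab => ?_)
    · rw [DS.measure_Ioc]; exact ENNReal.ofReal_ne_top
    · rw [DS.measure_Ioc, withDensity_apply _ measurableSet_Ioc,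
        ← ofReal_integral_eq_lintegral_ofReal hf_int.integrableOn
          (ae_of_all _ fun x => hf_nonneg x)]
      congr 1
      have := intervalIntegral.integral_Iic_sub_Iic (μ := volume) (a := a) (b := b)
        hf_int.integrableOn hf_int.integrableOn
      rw [intervalIntegral.integral_of_le hab.le] at this
      show D b - D a = _
      rw [this]
  have hD_deriv : ∀ᵐ x, HasDerivAt D (f x) x := by
    have hrn : DS.measure.rnDeriv volume =ᵐ[volume] fun x => ENNReal.ofReal (f x) := by
      rw [hDSm]
      exact Measure.rnDeriv_withDensity volume (ENNReal.measurable_ofReal.comp hf_meas)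
    filter_upwards [DS.ae_hasDerivAt, hrn] with x h1 h2
    have : (DS.measure.rnDeriv volume x).toReal = f x := by
      rw [h2]; exact ENNReal.toReal_ofReal (hf_nonneg x)
    rw [this] at h1
    exact h1
  -- the monotone function G = -(F ^ γ)
  set G : ℝ → ℝ := fun x => -(F x ^ γ) with hGdef
  have hG_mono : Monotone G := by
    intro a b hab
    simp only [hGdef, neg_le_neg_iff]
    exact Real.rpow_le_rpow (hF_nonneg b) (hF_anti hab) hγ.le
  have hG_cont : Continuous G := by
    have : Continuous fun x => F x ^ γ := by
      rw [continuous_iff_continuousAt]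
      intro x
      exact (Real.continuousAt_rpow_const (F x) γ (Or.inr hγ.le)).comp
        ((continuous_const.sub hD_cont).congr (fun y => (hFD y).symm)).continuousAt
    exact this.neg
  let GS : StieltjesFunction ℝ :=
    ⟨G, hG_mono, fun x => hG_cont.continuousAt.continuousWithinAt⟩
  have hG_deriv : ∀ᵐ x ∂(volume.restrict (Ioc 0 t)), HasDerivAt G (g x) x := by
    filter_upwards [ae_restrict_mem measurableSet_Ioc, ae_restrict_of_ae hD_deriv] with x hx hD
    have hx0 : (0:ℝ) ≤ x := hx.1.le
    have hF' : HasDerivAt F (-(f x)) x := by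
      have h1 : HasDerivAt (fun y => 1 - D y) (-(f x)) x := hD.const_sub 1
      have h2 : F = fun y => 1 - D y := funext hFD
      rw [h2]; exact h1
    have hFx : (0:ℝ) < F x := hFpos x hx0
    have h2 : HasDerivAt (fun y => F y ^ γ) (-(f x) * γ * F x ^ (γ - 1)) x :=
      hF'.rpow_const (Or.inl hFx.ne')
    have h3 : HasDerivAt G (-(-(f x) * γ * F x ^ (γ - 1))) x := h2.neg
    have : g x = -(-(f x) * γ * F x ^ (γ - 1)) := by
      rw [hphr x hx0]; ring
    rw [this]
    exact h3
  have key : (∫ x in Ioc 0 t, g x) ≤ G t - G 0 := by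
    have hGrn : ∀ᵐ x ∂(volume.restrict (Ioc 0 t)),
        g x = (GS.measure.rnDeriv volume x).toReal := by
      filter_upwards [hG_deriv, ae_restrict_of_ae GS.ae_hasDerivAt] with x h1 h2
      exact h1.unique h2
    calc (∫ x in Ioc 0 t, g x) = ∫ x in Ioc 0 t, (GS.measure.rnDeriv volume x).toReal :=
          integral_congr_ae hGrn
      _ ≤ (GS.measure (Ioc 0 t)).toReal := by
          apply Measure.setIntegral_toReal_rnDeriv_le
          rw [GS.measure_Ioc]; exact ENNReal.ofReal_ne_top
      _ = G t - G 0 := by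
          rw [GS.measure_Ioc, ENNReal.toReal_ofReal (sub_nonneg.2 (hG_mono ht))]
  have hsplit : (∫ x in Iic t, g x) = (∫ x in Iic 0, g x) + ∫ x in Ioc 0 t, g x := by
    rw [← setIntegral_union (Iic_disjoint_Ioc le_rfl) measurableSet_Ioc
      hg_int.integrableOn hg_int.integrableOn, Iic_union_Ioc_eq_Iic ht]
  have htot : (∫ x in Iic t, g x) + (∫ x in Ioi t, g x) = 1 := by
    rw [← hg_one]
    exact intervalIntegral.integral_Iic_add_Ioi hg_int.integrableOn hg_int.integrableOn
  have hGt : G t - G 0 = 1 - F t ^ γ := by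
    simp only [hGdef, hF0, Real.one_rpow]; ring
  have : (∫ x in Ioi t, g x) = 1 - ∫ x in Ioc 0 t, g x := by
    rw [hsplit, hG0] at htot; linarith
  rw [this]
  rw [hGt] at key
  show F t ^ γ ≤ _
  linarith

/-- under the PHR model,
`J^w(X,Y;t) ≥ -(γ/2)∫_t^∞ x λ_F(x)² dx`. -/
theorem weighted_residual_inaccuracy_hazard_lower_bound
    (f g : ℝ → ℝ) (γ : ℝ) (hγ : 0 < γ)
    (hf_meas : Measurable f) (hg_meas : Measurable g)
    (hf_nonneg : ∀ x, 0 ≤ f x) (hg_nonneg : ∀ x, 0 ≤ g x)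
    (hf_zero : ∀ x < 0, f x = 0) (hg_zero : ∀ x < 0, g x = 0)
    (hf_one : ∫ x, f x = 1) (hg_one : ∫ x, g x = 1)
    (hFpos : ∀ x ≥ (0 : ℝ), 0 < ∫ y in Ioi x, f y)
    (hphr : ∀ x ≥ (0 : ℝ), g x = γ * f x * (∫ y in Ioi x, f y) ^ (γ - 1))
    (t : ℝ) (ht : 0 ≤ t)
    (hfin : IntegrableOn
      (fun x => x * (f x / (∫ y in Ioi x, f y)) ^ 2) (Ioi t)) :
    -(1 / 2) * ∫ x in Ioi t,
        x * f x * g x / ((∫ y in Ioi t, f y) * (∫ y in Ioi t, g y))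
      ≥ -(γ / 2) * ∫ x in Ioi t, x * (f x / (∫ y in Ioi x, f y)) ^ 2 := by
  have hf_int : Integrable f := by
    by_contra h; rw [integral_undef h] at hf_one; norm_num at hf_one
  have hF_anti : ∀ a b : ℝ, a ≤ b → (∫ y in Ioi b, f y) ≤ ∫ y in Ioi a, f y := by
    intro a b hab
    exact setIntegral_mono_set hf_int.integrableOn (ae_of_all _ hf_nonneg)
      (HasSubset.Subset.eventuallyLE (Ioi_subset_Ioi hab))
  have hF_nonneg : ∀ x : ℝ, 0 ≤ ∫ y in Ioi x, f y := fun x =>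
    setIntegral_nonneg measurableSet_Ioi fun y _ => hf_nonneg y
  set A : ℝ := ∫ y in Ioi t, f y with hAdef
  set B : ℝ := ∫ y in Ioi t, g y with hBdef
  have hA : 0 < A := hFpos t ht
  have hB : A ^ γ ≤ B :=
    survival_rpow_le f g γ hγ hf_meas hf_nonneg hg_nonneg hf_zero hg_zero hf_one hg_one
      hFpos hphr t ht
  have hBpos : 0 < B := lt_of_lt_of_le (Real.rpow_pos_of_pos hA γ) hB
  have hbound : ∀ x ∈ Ioi t,
      x * f x * g x / (A * B) ≤ γ * (x * (f x / (∫ y in Ioi x, f y)) ^ 2) := by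
    intro x hx
    have hx0 : (0:ℝ) ≤ x := le_trans ht (le_of_lt hx)
    have hFx : (0:ℝ) < ∫ y in Ioi x, f y := hFpos x hx0
    set Fx : ℝ := ∫ y in Ioi x, f y with hFxdef
    rw [hphr x hx0]
    have e1 : Fx ^ (γ - 1) * Fx ^ (2:ℕ) = Fx ^ (γ + 1) := by
      rw [← Real.rpow_natCast Fx 2, ← Real.rpow_add hFx]; congr 1; push_cast; ring
    have e2 : Fx ^ (γ + 1) = Fx ^ γ * Fx := by
      rw [Real.rpow_add hFx, Real.rpow_one]
    have le1 : Fx ^ γ ≤ B :=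
      le_trans (Real.rpow_le_rpow (hF_nonneg x) (hF_anti t x (le_of_lt hx)) hγ.le) hB
    have le2 : Fx ≤ A := hF_anti t x (le_of_lt hx)
    have hABle : Fx ^ (γ - 1) * Fx ^ (2:ℕ) ≤ A * B := by
      rw [e1, e2, mul_comm A B]
      exact mul_le_mul le1 le2 hFx.le hBpos.le
    have hdiv : Fx ^ (γ - 1) / (A * B) ≤ 1 / Fx ^ (2:ℕ) := by
      rw [div_le_div_iff₀ (by positivity) (by positivity), one_mul]
      exact hABle
    calc x * f x * (γ * f x * Fx ^ (γ - 1)) / (A * B)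
        = (γ * x * f x ^ 2) * (Fx ^ (γ - 1) / (A * B)) := by ring
      _ ≤ (γ * x * f x ^ 2) * (1 / Fx ^ (2:ℕ)) := by
          have hc : (0:ℝ) ≤ γ * x * f x ^ 2 :=
            mul_nonneg (mul_nonneg hγ.le hx0) (sq_nonneg _)
          nlinarith [hdiv, hc]
      _ = γ * (x * (f x / Fx) ^ 2) := by
          field_simp
  have hint2 : IntegrableOn
      (fun x => γ * (x * (f x / (∫ y in Ioi x, f y)) ^ 2)) (Ioi t) := hfin.const_mul γ
  have hmeas : AEStronglyMeasurable (fun x => x * f x * g x / (A * B))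
      (volume.restrict (Ioi t)) :=
    (((measurable_id.mul hf_meas).mul hg_meas).div_const (A * B)).aestronglyMeasurable
  have hint1 : IntegrableOn (fun x => x * f x * g x / (A * B)) (Ioi t) := by
    apply Integrable.mono' hint2 hmeas
    filter_upwards [ae_restrict_mem measurableSet_Ioi] with x hx
    have hx0 : (0:ℝ) ≤ x := le_trans ht (le_of_lt hx)
    rw [Real.norm_of_nonneg (div_nonneg (mul_nonneg (mul_nonneg hx0 (hf_nonneg x))
      (hg_nonneg x)) (mul_nonneg hA.le hBpos.le))]
    exact hbound x hx
  have hle : (∫ x in Ioi t, x * f x * g x / (A * B))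
      ≤ ∫ x in Ioi t, γ * (x * (f x / (∫ y in Ioi x, f y)) ^ 2) :=
    setIntegral_mono_on hint1 hint2 measurableSet_Ioi hbound
  rw [integral_const_mul] at hle
  linarith
end

section
/- Fix t ≥ 0 with F̄(t) > 0 and Ḡ(x) > 0 for all x ≥ t, and suppose the hazard rate λ_G(x) = g(x)/Ḡ(x) of Y is decreasing on [t,∞). Then, assuming E(X) = ∫_0^∞ x f(x) dx < ∞, the weighted residual inaccuracy satisfies J^w(X,Y;t) ≥ -(1/2) λ_G(t) V(X;t), where V(X;t) = (1/F̄(t))∫_t^∞ x f(x) dx is the vitality (conditional mean) function of X. -/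
open MeasureTheory Set

/-- if the hazard rate of `Y` is decreasing on `[t,∞)`, then
`J^w(X,Y;t) ≥ -(1/2) λ_G(t) V(X;t)`. -/
theorem weighted_residual_inaccuracy_vitality_lower_bound
    (f g : ℝ → ℝ)
    (hf_meas : Measurable f) (hg_meas : Measurable g)
    (hf_nonneg : ∀ x, 0 ≤ f x) (hg_nonneg : ∀ x, 0 ≤ g x)
    (hf_zero : ∀ x < 0, f x = 0) (hg_zero : ∀ x < 0, g x = 0)
    (hf_one : ∫ x, f x = 1) (hg_one : ∫ x, g x = 1)
    (t : ℝ) (ht : 0 ≤ t)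
    (hF : 0 < ∫ x in Ioi t, f x)
    (hG : ∀ x ≥ t, 0 < ∫ y in Ioi x, g y)
    (hG_anti : AntitoneOn (fun x => g x / (∫ y in Ioi x, g y)) (Ici t))
    (hmean : IntegrableOn (fun x => x * f x) (Ioi 0)) :
    -(1 / 2) * ∫ x in Ioi t,
        x * f x * g x / ((∫ y in Ioi t, f y) * (∫ y in Ioi t, g y))
      ≥ -(1 / 2) * (g t / (∫ y in Ioi t, g y)) *
          ((∫ x in Ioi t, x * f x) / (∫ y in Ioi t, f y)) := by
  set A := ∫ y in Ioi t, f y with hA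
  set B := ∫ y in Ioi t, g y with hB
  have hBpos : 0 < B := hG t le_rfl
  -- g is integrable
  have hg_int : Integrable g := by
    by_contra h
    rw [integral_undef h] at hg_one
    norm_num at hg_one
  -- pointwise bound: g x ≤ g t for x ≥ t
  have hgle : ∀ x ∈ Ioi t, g x ≤ g t := by
    intro x hx
    have hxt : t ≤ x := le_of_lt hx
    have hGx : 0 < ∫ y in Ioi x, g y := hG x hxt
    have hsub : (Ioi x : Set ℝ) ⊆ Ioi t := Ioi_subset_Ioi hxt
    have hGle : (∫ y in Ioi x, g y) ≤ B := by
      apply setIntegral_mono_set (hg_int.integrableOn)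
        (Filter.Eventually.of_forall hg_nonneg) (HasSubset.Subset.eventuallyLE hsub)
    have hlam := hG_anti (mem_Ici.mpr le_rfl) (mem_Ici.mpr hxt) hxt
    simp only at hlam
    -- hlam : g x / (∫ y in Ioi x, g y) ≤ g t / B
    have h1 : g x * B ≤ g t * (∫ y in Ioi x, g y) := by
      rw [div_le_div_iff₀ hGx hBpos] at hlam
      linarith
    nlinarith [hg_nonneg t, hg_nonneg x]
  -- integrability of x * f x on Ioi t
  have hxf_int : IntegrableOn (fun x => x * f x) (Ioi t) :=
    hmean.mono_set (Ioi_subset_Ioi ht)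
  -- integrability of x * f x * g x on Ioi t
  have hxfg_int : IntegrableOn (fun x => x * f x * g x) (Ioi t) := by
    apply Integrable.mono' (hxf_int.const_mul (g t))
    · exact (((measurable_id.mul hf_meas).mul hg_meas).aestronglyMeasurable)
    · filter_upwards [ae_restrict_mem measurableSet_Ioi] with x hx
      have hx0 : (0:ℝ) ≤ x := le_trans ht (le_of_lt hx)
      have h1 : 0 ≤ x * f x := mul_nonneg hx0 (hf_nonneg x)
      rw [Real.norm_eq_abs, abs_of_nonneg (mul_nonneg h1 (hg_nonneg x))]
      calc x * f x * g x ≤ x * f x * g t := by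
            exact mul_le_mul_of_nonneg_left (hgle x hx) h1
        _ = g t * (x * f x) := by ring
  -- key integral inequality
  have hkey : (∫ x in Ioi t, x * f x * g x) ≤ g t * ∫ x in Ioi t, x * f x := by
    rw [← integral_const_mul]
    apply setIntegral_mono_on hxfg_int (hxf_int.const_mul (g t)) measurableSet_Ioi
    intro x hx
    have hx0 : (0:ℝ) ≤ x := le_trans ht (le_of_lt hx)
    have h1 : 0 ≤ x * f x := mul_nonneg hx0 (hf_nonneg x)
    calc x * f x * g x ≤ x * f x * g t := mul_le_mul_of_nonneg_left (hgle x hx) h1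
      _ = g t * (x * f x) := by ring
  have hdiv : (∫ x in Ioi t,
      x * f x * g x / ((∫ y in Ioi t, f y) * (∫ y in Ioi t, g y)))
      = (∫ x in Ioi t, x * f x * g x) / (A * B) := by
    simp [integral_div, hA, hB]
  rw [hdiv]
  have hABpos : 0 < A * B := mul_pos hF hBpos
  have h2 : (∫ x in Ioi t, x * f x * g x) / (A * B)
      ≤ (g t * ∫ x in Ioi t, x * f x) / (A * B) :=
    by gcongr
  have heq : -(1 / 2) * (g t / B) * ((∫ x in Ioi t, x * f x) / A)
      = -(1/2) * ((g t * ∫ x in Ioi t, x * f x) / (A * B)) := by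
    rw [mul_assoc, div_mul_div_comm, mul_comm B A]
  rw [heq]
  nlinarith [h2]
end

section
/- Suppose X and Y satisfy the PHR model with constant γ > 0, and the density f is decreasing on [0,∞) with f(0) ≤ 1 (hence f(x) ≤ 1 for all x ≥ 0). Then for every t ≥ 0 with F̄(t) > 0, assuming ∫_t^∞ x F̄(x)^{γ−1} dx is finite, J^w(X,Y;t) ≥ c₂ ∫_t^∞ x F̄(x)^{γ−1} dx, where c₂ = −γ/(2 F̄(t)^{γ+1}). -/
open MeasureTheory Set Filter Topology

theorem phr_tail_ge (f g : ℝ → ℝ) (γ : ℝ) (hγ : 0 < γ)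
    (hf_meas : Measurable f) (hf_nonneg : ∀ x, 0 ≤ f x)
    (hf_zero : ∀ x < 0, f x = 0) (hf_int : Integrable f) (hg_int : Integrable g) (hg_nonneg : ∀ x, 0 ≤ g x)
    (hf_anti : AntitoneOn f (Ici 0)) (hf0 : f 0 ≤ 1)
    (hphr : ∀ x ≥ (0:ℝ), g x = γ * f x * (∫ y in Ioi x, f y) ^ (γ - 1))
    (t : ℝ) (ht : 0 ≤ t) (hF : 0 < ∫ x in Ioi t, f x) :
    (∫ x in Ioi t, f x) ^ γ ≤ ∫ x in Ioi t, g x := by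
  set φ : ℝ → ℝ := fun x => ∫ y in Ioi x, f y with hφ_def
  have hf1 : ∀ x, 0 ≤ x → f x ≤ 1 := fun x hx =>
    le_trans (hf_anti self_mem_Ici hx hx) hf0
  have hf_ae : 0 ≤ᵐ[(volume : Measure ℝ)] f := Filter.Eventually.of_forall hf_nonneg
  have φ_anti : Antitone φ := fun x y hxy =>
    setIntegral_mono_set hf_int.integrableOn (ae_restrict_of_ae hf_ae)
      (HasSubset.Subset.eventuallyLE (Ioi_subset_Ioi hxy))
  have φ_nonneg : ∀ x, 0 ≤ φ x := fun x =>
    setIntegral_nonneg measurableSet_Ioi fun y _ => hf_nonneg y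
  -- splitting the tail integral
  have split : ∀ x y : ℝ, x ≤ y → φ x = (∫ u in Ioc x y, f u) + φ y := by
    intro x y hxy
    rw [hφ_def]
    have := setIntegral_union (Ioc_disjoint_Ioi le_rfl) measurableSet_Ioi
      (hf_int.integrableOn (s := Ioc x y)) (hf_int.integrableOn (s := Ioi y))
    simp only [Ioc_union_Ioi_eq_Ioi hxy] at this
    exact this
  -- φ is continuous
  have φ_cont : Continuous φ := by
    have hprim : Continuous fun b => ∫ x in t..b, f x := hf_int.continuous_primitive t
    have : φ = fun x => φ t - ∫ u in t..x, f u := by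
      funext x
      rcases le_total t x with h | h
      · rw [intervalIntegral.integral_of_le h, split t x h]; ring
      · rw [intervalIntegral.integral_of_ge h, split x t h]
        ring
    rw [this]
    exact continuous_const.sub hprim
  -- right-limit function of f
  set fr : ℝ → ℝ := fun x => sSup (f '' Ioi x) with hfr_def
  have hbdd : ∀ x : ℝ, BddAbove (f '' Ioi x) := by
    intro x
    refine ⟨max (f 0) 1, ?_⟩
    rintro v ⟨y, hy, rfl⟩
    rcases le_or_gt 0 y with h | h
    · exact le_max_of_le_left (hf_anti self_mem_Ici h h)
    · rw [hf_zero y h]; positivity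
  have fr_anti : Antitone fr := by
    intro x y hxy
    exact csSup_le_csSup (hbdd x) (Set.Nonempty.image f nonempty_Ioi)
      (image_mono (Ioi_subset_Ioi hxy))
  have fr_le : ∀ x, 0 ≤ x → fr x ≤ f x := by
    intro x hx
    refine csSup_le (Set.Nonempty.image f nonempty_Ioi) ?_
    rintro v ⟨y, hy, rfl⟩
    exact hf_anti hx (hx.trans hy.le) hy.le
  have fr_nonneg : ∀ x, 0 ≤ fr x := by
    intro x
    exact (hf_nonneg (x+1)).trans (le_csSup (hbdd x) ⟨x+1, by simp, rfl⟩)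
  -- right derivative of φ
  have φ_deriv : ∀ x, 0 ≤ x → HasDerivWithinAt φ (-(fr x)) (Ioi x) x := by
    intro x hx
    rw [hasDerivWithinAt_iff_tendsto_slope]
    have hIoi : Ioi x \ {x} = Ioi x :=
      diff_singleton_eq_self (fun h => lt_irrefl x h)
    rw [hIoi]
    have key : ∀ y ∈ Ioi x, -(fr x) ≤ slope φ x y ∧ slope φ x y ≤ -(f y) := by
      intro y hy
      have hxy : x < y := hy
      have hsl : slope φ x y = -(∫ u in Ioc x y, f u) / (y - x) := by
        rw [slope_def_field, split x y hxy.le]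
        ring_nf
      have hub : ∫ u in Ioc x y, f u ≤ fr x * (y - x) := by
        have h1 : ∫ u in Ioc x y, f u ≤ ∫ _u in Ioc x y, fr x := by
          refine setIntegral_mono_on hf_int.integrableOn
            (integrableOn_const measure_Ioc_lt_top.ne) measurableSet_Ioc ?_
          intro u hu
          exact le_csSup (hbdd x) ⟨u, hu.1, rfl⟩
        rw [setIntegral_const, Real.volume_real_Ioc_of_le hxy.le, smul_eq_mul] at h1
        linarith [h1]
      have hlb : f y * (y - x) ≤ ∫ u in Ioc x y, f u := by
        have h1 : ∫ _u in Ioc x y, f y ≤ ∫ u in Ioc x y, f u := by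
          refine setIntegral_mono_on
            (integrableOn_const measure_Ioc_lt_top.ne) hf_int.integrableOn
            measurableSet_Ioc ?_
          intro u hu
          exact hf_anti (hx.trans hu.1.le) (hx.trans (hu.1.le.trans hu.2)) hu.2
        rw [setIntegral_const, Real.volume_real_Ioc_of_le hxy.le, smul_eq_mul] at h1
        linarith [h1]
      have hyx : (0:ℝ) < y - x := by linarith
      constructor
      · rw [hsl, le_div_iff₀ hyx]
        nlinarith [hub]
      · rw [hsl, div_le_iff₀ hyx]
        nlinarith [hlb]
    have hupper : Tendsto (fun y => -(f y)) (𝓝[>] x) (𝓝 (-(fr x))) := by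
      have : AntitoneOn f (Ioi x) := hf_anti.mono (fun y hy => hx.trans (le_of_lt hy))
      exact (this.tendsto_nhdsGT (hbdd x)).neg
    refine tendsto_of_tendsto_of_tendsto_of_le_of_le' tendsto_const_nhds hupper ?_ ?_
    · filter_upwards [self_mem_nhdsWithin] with y hy using (key y hy).1
    · filter_upwards [self_mem_nhdsWithin] with y hy using (key y hy).2
  -- the antitone global extension of f, for countability of discontinuities
  set ft : ℝ → ℝ := fun x => f (max x 0) with hft_def
  have ft_anti : Antitone ft := fun x y hxy =>
    hf_anti (le_max_right x 0) (le_max_right y 0) (max_le_max hxy le_rfl)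
  have hcont_ae : ∀ᵐ x ∂(volume : Measure ℝ), ContinuousAt ft x :=
    ae_iff.2 (ft_anti.countable_not_continuousAt.measure_zero volume)
  have fr_eq : ∀ x, 0 < x → ContinuousAt ft x → fr x = f x := by
    intro x hx hcx
    refine le_antisymm (fr_le x hx.le) ?_
    have h1 : Tendsto ft (𝓝[>] x) (𝓝 (ft x)) :=
      (hcx.continuousWithinAt : ContinuousWithinAt ft (Ioi x) x)
    have h2 : ∀ᶠ y in 𝓝[>] x, ft y ≤ fr x := by
      filter_upwards [self_mem_nhdsWithin] with y hy
      have hy0 : (0:ℝ) ≤ y := (hx.trans hy).le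
      have : ft y = f y := by rw [hft_def]; simp [max_eq_left hy0]
      rw [this]
      exact le_csSup (hbdd x) ⟨y, hy, rfl⟩
    have h3 : ft x ≤ fr x := le_of_tendsto h1 h2
    have : ft x = f x := by rw [hft_def]; simp [max_eq_left hx.le]
    linarith [h3, this.ge]
  -- main estimate on finite intervals
  have main : ∀ b, t ≤ b → 0 < φ b → φ t ^ γ - φ b ^ γ ≤ ∫ x in Ioi t, g x := by
    intro b htb hφb
    set G' : ℝ → ℝ := fun x => γ * fr x * φ x ^ (γ - 1) with hG'_def
    have hderiv : ∀ x ∈ Ioo t b, HasDerivWithinAt (fun u => -(φ u ^ γ)) (G' x) (Ioi x) x := by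
      intro x hxm
      have hx0 : 0 ≤ x := le_trans ht hxm.1.le
      have hφx : 0 < φ x := lt_of_lt_of_le hφb (φ_anti hxm.2.le)
      have h1 : HasDerivAt (fun u : ℝ => u ^ γ) (γ * φ x ^ (γ - 1)) (φ x) :=
        Real.hasDerivAt_rpow_const (Or.inl (ne_of_gt hφx))
      have h2 : HasDerivWithinAt (fun u => -(φ u ^ γ)) (-(γ * φ x ^ (γ - 1) * -fr x)) (Ioi x) x :=
        (h1.comp_hasDerivWithinAt x (φ_deriv x hx0)).neg
      convert h2 using 1
      show γ * fr x * φ x ^ (γ - 1) = _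
      ring
    have hcont : ContinuousOn (fun u => -(φ u ^ γ)) (Icc t b) :=
      ((φ_cont.rpow_const (fun u => Or.inr hγ.le)).neg).continuousOn
    have hφpow_meas : Measurable (fun x => φ x ^ (γ - 1)) := by
      have := φ_anti.measurable
      measurability
    have hG'meas : Measurable G' :=
      (measurable_const.mul fr_anti.measurable).mul hφpow_meas
    set C : ℝ := max (φ b ^ (γ - 1)) (φ t ^ (γ - 1)) with hC_def
    have hG'int : IntervalIntegrable G' volume t b := by
      rw [intervalIntegrable_iff_integrableOn_Ioc_of_le htb]
      refine Integrable.mono' (g := fun _ => γ * 1 * C)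
        (integrableOn_const measure_Ioc_lt_top.ne)
        hG'meas.aestronglyMeasurable ?_
      filter_upwards [ae_restrict_mem measurableSet_Ioc] with x hx
      have hx0 : (0:ℝ) ≤ x := le_trans ht hx.1.le
      have h1 : φ x ^ (γ - 1) ≤ C := by
        rcases le_or_gt 0 (γ - 1) with h | h
        · exact le_max_of_le_right
            (Real.rpow_le_rpow (φ_nonneg x) (φ_anti hx.1.le) h)
        · exact le_max_of_le_left
            (Real.rpow_le_rpow_of_nonpos hφb (φ_anti hx.2) h.le)
      have h2 : fr x ≤ 1 := (fr_le x hx0).trans (hf1 x hx0)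
      have h3 : (0:ℝ) ≤ φ x ^ (γ - 1) := Real.rpow_nonneg (φ_nonneg x) _
      have h4 : (0:ℝ) ≤ γ * fr x * φ x ^ (γ - 1) :=
        mul_nonneg (mul_nonneg hγ.le (fr_nonneg x)) h3
      rw [Real.norm_eq_abs]
      show |γ * fr x * φ x ^ (γ - 1)| ≤ γ * 1 * C
      rw [abs_of_nonneg h4]
      have h5 : γ * fr x * φ x ^ (γ - 1) ≤ γ * 1 * φ x ^ (γ - 1) := by
        have := mul_le_mul_of_nonneg_left h2 hγ.le
        nlinarith [h3]
      have h6 : γ * 1 * φ x ^ (γ - 1) ≤ γ * 1 * C := by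
        nlinarith [h1]
      linarith
    have hftc := intervalIntegral.integral_eq_sub_of_hasDeriv_right_of_le htb hcont hderiv hG'int
    have hgG' : ∫ x in t..b, g x = ∫ x in t..b, G' x := by
      refine intervalIntegral.integral_congr_ae ?_
      rw [uIoc_of_le htb]
      filter_upwards [hcont_ae] with x hcx hx
      have hx0 : (0:ℝ) < x := lt_of_le_of_lt ht hx.1
      rw [hphr x hx0.le]
      show γ * f x * φ x ^ (γ - 1) = γ * fr x * φ x ^ (γ - 1)
      rw [fr_eq x hx0 hcx]
    have h4 : ∫ x in Ioc t b, g x ≤ ∫ x in Ioi t, g x :=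
      setIntegral_mono_set hg_int.integrableOn
        (ae_restrict_of_ae (Eventually.of_forall hg_nonneg))
        (HasSubset.Subset.eventuallyLE Ioc_subset_Ioi_self)
    have h5 : ∫ x in Ioc t b, g x = φ t ^ γ - φ b ^ γ := by
      rw [← intervalIntegral.integral_of_le htb, hgG', hftc]
      ring
    linarith [h4, h5]
  -- φ tends to 0 at infinity
  have htend : Tendsto φ atTop (𝓝 0) := by
    have h1 := intervalIntegral_tendsto_integral_Ioi t hf_int.integrableOn tendsto_id
    have h2 : Tendsto (fun b => φ t - ∫ x in t..b, f x) atTop (𝓝 (φ t - φ t)) :=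
      tendsto_const_nhds.sub h1
    rw [sub_self] at h2
    refine h2.congr' ?_
    filter_upwards [eventually_ge_atTop t] with b hb
    rw [intervalIntegral.integral_of_le hb, split t b hb]
    ring
  -- conclusion by contradiction
  by_contra hlt
  push_neg at hlt
  set ε : ℝ := φ t ^ γ - ∫ x in Ioi t, g x with hε_def
  have hε0 : 0 < ε := sub_pos.2 hlt
  set v : ℝ := min (φ t) (ε ^ (1/γ)) / 2 with hv_def
  have hεγ : 0 < ε ^ (1/γ) := Real.rpow_pos_of_pos hε0 _
  have hv0 : 0 < v := by
    rw [hv_def]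
    have := lt_min hF hεγ
    positivity
  have hvφ : v < φ t := by
    rw [hv_def]
    have h1 : min (φ t) (ε ^ (1/γ)) ≤ φ t := min_le_left _ _
    linarith [hF]
  obtain ⟨b₀, hb₀1, hb₀2⟩ : ∃ b₀, φ b₀ < v ∧ t ≤ b₀ :=
    ((htend.eventually (gt_mem_nhds hv0)).and (eventually_ge_atTop t)).exists
  obtain ⟨b, hbmem, hφb⟩ : ∃ b ∈ Icc t b₀, φ b = v := by
    have := intermediate_value_Icc' hb₀2 φ_cont.continuousOn (a := t) (b := b₀)
    exact this ⟨hb₀1.le, hvφ.le⟩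
  have hmain := main b hbmem.1 (hφb ▸ hv0)
  have hvγ : v ^ γ < ε := by
    have h1 : v < ε ^ (1/γ) := by
      rw [hv_def]
      have h2 : min (φ t) (ε ^ (1/γ)) ≤ ε ^ (1/γ) := min_le_right _ _
      linarith
    calc v ^ γ < (ε ^ (1/γ)) ^ γ := Real.rpow_lt_rpow hv0.le h1 hγ
      _ = ε := by
        rw [← Real.rpow_mul hε0.le, one_div, inv_mul_cancel₀ (ne_of_gt hγ), Real.rpow_one]
  rw [hφb] at hmain
  linarith [hmain]

/-- under the PHR model with `f` decreasing and `f(0) ≤ 1`,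
`J^w(X,Y;t) ≥ c₂ ∫_t^∞ x F̄(x)^{γ−1} dx` with `c₂ = −γ/(2F̄(t)^{γ+1})`. -/
theorem weighted_residual_inaccuracy_decreasing_density_bound
    (f g : ℝ → ℝ) (γ : ℝ) (hγ : 0 < γ)
    (hf_meas : Measurable f) (hg_meas : Measurable g)
    (hf_nonneg : ∀ x, 0 ≤ f x) (hg_nonneg : ∀ x, 0 ≤ g x)
    (hf_zero : ∀ x < 0, f x = 0) (hg_zero : ∀ x < 0, g x = 0)
    (hf_one : ∫ x, f x = 1) (hg_one : ∫ x, g x = 1)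
    (hphr : ∀ x ≥ (0 : ℝ), g x = γ * f x * (∫ y in Ioi x, f y) ^ (γ - 1))
    (hf_anti : AntitoneOn f (Ici 0)) (hf0 : f 0 ≤ 1)
    (t : ℝ) (ht : 0 ≤ t) (hF : 0 < ∫ x in Ioi t, f x)
    (hfin : IntegrableOn (fun x => x * (∫ y in Ioi x, f y) ^ (γ - 1)) (Ioi t)) :
    -(1 / 2) * ∫ x in Ioi t,
        x * f x * g x / ((∫ y in Ioi t, f y) * (∫ y in Ioi t, g y))
      ≥ (-γ / (2 * (∫ y in Ioi t, f y) ^ (γ + 1))) *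
          ∫ x in Ioi t, x * (∫ y in Ioi x, f y) ^ (γ - 1) := by
  have hf_int : Integrable f := by
    by_contra h
    rw [integral_undef h] at hf_one
    norm_num at hf_one
  have hg_int : Integrable g := by
    by_contra h
    rw [integral_undef h] at hg_one
    norm_num at hg_one
  set F : ℝ := ∫ y in Ioi t, f y with hF_def
  set G : ℝ := ∫ y in Ioi t, g y with hG_def
  set B : ℝ := ∫ x in Ioi t, x * (∫ y in Ioi x, f y) ^ (γ - 1) with hB_def
  have hkey : F ^ γ ≤ G :=
    phr_tail_ge f g γ hγ hf_meas hf_nonneg hf_zero hf_int hg_int hg_nonneg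
      hf_anti hf0 hphr t ht hF
  have hFγ : 0 < F ^ γ := Real.rpow_pos_of_pos hF γ
  have hG0 : 0 < G := lt_of_lt_of_le hFγ hkey
  have hf1 : ∀ x, 0 ≤ x → f x ≤ 1 := fun x hx =>
    le_trans (hf_anti self_mem_Ici hx hx) hf0
  have hB0 : 0 ≤ B :=
    setIntegral_nonneg measurableSet_Ioi fun x hx =>
      mul_nonneg (le_trans ht (le_of_lt hx))
        (Real.rpow_nonneg
          (setIntegral_nonneg measurableSet_Ioi fun y _ => hf_nonneg y) _)
  set I : ℝ := ∫ x in Ioi t, x * f x * g x with hI_def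
  have hI : I ≤ γ * B := by
    have hmono : ∀ᵐ x ∂(volume.restrict (Ioi t)),
        x * f x * g x ≤ γ * (x * (∫ y in Ioi x, f y) ^ (γ - 1)) := by
      rw [ae_restrict_iff' measurableSet_Ioi]
      refine Eventually.of_forall fun x hx => ?_
      have hx0 : (0:ℝ) ≤ x := le_trans ht (le_of_lt hx)
      have h1 : f x ≤ 1 := hf1 x hx0
      have h2 : 0 ≤ f x := hf_nonneg x
      have h3 : (0:ℝ) ≤ (∫ y in Ioi x, f y) ^ (γ - 1) :=
        Real.rpow_nonneg
          (setIntegral_nonneg measurableSet_Ioi fun y _ => hf_nonneg y) _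
      rw [hphr x hx0]
      have h4 : f x * f x ≤ 1 := by nlinarith
      have h5 : (0:ℝ) ≤ γ * (x * (∫ y in Ioi x, f y) ^ (γ - 1)) :=
        mul_nonneg hγ.le (mul_nonneg hx0 h3)
      calc x * f x * (γ * f x * (∫ y in Ioi x, f y) ^ (γ - 1))
          = γ * (x * (∫ y in Ioi x, f y) ^ (γ - 1)) * (f x * f x) := by ring
        _ ≤ γ * (x * (∫ y in Ioi x, f y) ^ (γ - 1)) * 1 :=
            mul_le_mul_of_nonneg_left h4 h5
        _ = γ * (x * (∫ y in Ioi x, f y) ^ (γ - 1)) := by ring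
    have hnn : 0 ≤ᵐ[volume.restrict (Ioi t)] fun x => x * f x * g x := by
      filter_upwards [ae_restrict_mem measurableSet_Ioi] with x hx
      have hx0 : (0:ℝ) ≤ x := le_trans ht (le_of_lt hx)
      exact mul_nonneg (mul_nonneg hx0 (hf_nonneg x)) (hg_nonneg x)
    have := integral_mono_of_nonneg hnn (hfin.const_mul γ) hmono
    rwa [integral_const_mul] at this
  have e1 : ∫ x in Ioi t, x * f x * g x / (F * G) = I / (F * G) :=
    integral_div _ _
  have hFγ1 : 0 < F ^ (γ + 1) := Real.rpow_pos_of_pos hF _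
  have hFG : F ^ (γ + 1) ≤ F * G := by
    have : F ^ (γ + 1) = F ^ γ * F := by
      rw [Real.rpow_add hF, Real.rpow_one]
    rw [this]
    calc F ^ γ * F ≤ G * F := mul_le_mul_of_nonneg_right hkey hF.le
      _ = F * G := mul_comm _ _
  have key2 : I / (F * G) ≤ γ * B / F ^ (γ + 1) :=
    div_le_div₀ (mul_nonneg hγ.le hB0) hI hFγ1 hFG
  rw [e1, ge_iff_le]
  have e2 : (-γ / (2 * F ^ (γ + 1))) * B = -(1/2) * (γ * B / F ^ (γ + 1)) := by
    field_simp
  rw [e2]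
  nlinarith [key2]
end

section
/- Suppose X and Y satisfy the PHR model with constant γ > 0 and F̄(x) > 0 for all x ≥ 0. Then for every t ≥ 0, assuming ∫_t^∞ x λ_F(x) f(x) dx is finite, the weighted residual inaccuracy satisfies J^w(X,Y;t) ≥ −(γ/(2 F̄(t)))∫_t^∞ x λ_F(x) f(x) dx, where λ_F(x) = f(x)/F̄(x) is the hazard rate of X. -/
open MeasureTheory Set Filter Topology NNReal ENNReal

lemma phr_surv_integral (f : ℝ → ℝ) (hf_meas : Measurable f)
    (hf_nonneg : ∀ x, 0 ≤ f x) (hf_one : ∫ x, f x = 1)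
    (hFpos : ∀ x ≥ (0 : ℝ), 0 < ∫ y in Ioi x, f y)
    (γ : ℝ) (hγ : 0 < γ) (t : ℝ) (ht : 0 ≤ t) :
    ∫ x in Ioi t, γ * f x * (∫ y in Ioi x, f y) ^ (γ - 1)
      = (∫ y in Ioi t, f y) ^ γ := by
  set F : ℝ → ℝ := fun x => ∫ y in Ioi x, f y with hFdef
  have hf_int : Integrable f := by
    by_contra h
    rw [integral_undef h] at hf_one; norm_num at hf_one
  have hIoc : ∀ a b : ℝ, a ≤ b → F a = (∫ y in Ioc a b, f y) + F b := by
    intro a b hab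
    simp only [hFdef]
    rw [← setIntegral_union (Ioc_disjoint_Ioi le_rfl) measurableSet_Ioi
      hf_int.integrableOn hf_int.integrableOn, Ioc_union_Ioi_eq_Ioi hab]
  have hanti : Antitone F := by
    intro a b hab
    rw [hIoc a b hab]
    have : 0 ≤ ∫ y in Ioc a b, f y :=
      setIntegral_nonneg measurableSet_Ioc fun x _ => hf_nonneg x
    linarith
  have hF_sub : ∀ x, F x = F 0 - ∫ u in (0:ℝ)..x, f u := by
    intro x
    rcases le_total 0 x with h | h
    · rw [intervalIntegral.integral_of_le h, hIoc 0 x h]; ring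
    · rw [intervalIntegral.integral_symm, intervalIntegral.integral_of_le h,
        hIoc x 0 h]; ring
  have hFc : Continuous F := by
    have : Continuous fun x => F 0 - ∫ u in (0:ℝ)..x, f u :=
      continuous_const.sub
        (intervalIntegral.continuous_primitive (fun a b => hf_int.intervalIntegrable) 0)
    exact this.congr fun x => (hF_sub x).symm
  have hFpos' : ∀ x, 0 < F x := by
    intro x
    exact lt_of_lt_of_le (hFpos (max x 0) (le_max_right x 0)) (hanti (le_max_left x 0))
  have htend : ∀ w : ℝ, 0 < w → ∃ x, t ≤ x ∧ F x ≤ w := by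
    intro w hw
    have hmono : Monotone fun n : ℕ => Iic (n : ℝ) := fun m n hmn =>
      Iic_subset_Iic.2 (by exact_mod_cast hmn)
    have hunion : (⋃ n : ℕ, Iic (n : ℝ)) = univ := by
      ext x; simp only [mem_iUnion, mem_Iic, mem_univ, iff_true]
      exact (exists_nat_ge x).imp fun n hn => hn
    have htd : Tendsto (fun n : ℕ => ∫ y in Iic (n:ℝ), f y) atTop (𝓝 1) := by
      have := tendsto_setIntegral_of_monotone (fun n : ℕ => measurableSet_Iic)
        hmono (by rw [hunion]; exact hf_int.integrableOn)
      rwa [hunion, setIntegral_univ, hf_one] at this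
    have hev : ∀ᶠ n : ℕ in atTop, 1 - w < ∫ y in Iic (n:ℝ), f y :=
      htd.eventually (eventually_gt_nhds (by linarith))
    have hev2 : ∀ᶠ n : ℕ in atTop, t ≤ (n : ℝ) :=
      tendsto_natCast_atTop_atTop.eventually_ge_atTop t
    obtain ⟨n, h1, h2⟩ := (hev.and hev2).exists
    refine ⟨n, h2, ?_⟩
    have hco : (∫ y in Iic (n:ℝ), f y) + ∫ y in Ioi (n:ℝ), f y = 1 := by
      rw [← compl_Iic, integral_add_compl measurableSet_Iic hf_int, hf_one]
    have hFn : F n = ∫ y in Ioi (n:ℝ), f y := rfl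
    linarith
  set c : ℝ := F t with hcdef
  have hc : 0 < c := hFpos t ht
  -- the m(w) lemma
  have hm : ∀ w : ℝ, 0 ≤ w → w ≤ c → ∫ x in Ioi t ∩ F ⁻¹' Iic w, f x = w := by
    intro w hw0 hwc
    rcases hw0.eq_or_lt with rfl | hw
    · have : Ioi t ∩ F ⁻¹' Iic 0 = ∅ := by
        ext x
        simp only [mem_inter_iff, mem_Ioi, mem_preimage, mem_Iic, mem_empty_iff_false,
          iff_false, not_and, not_le]
        exact fun _ => hFpos' x
      rw [this, setIntegral_empty]
    · set U : Set ℝ := {x | t ≤ x ∧ F x ≤ w} with hUdef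
      have hUclosed : IsClosed U := by
        have : U = Ici t ∩ F ⁻¹' Iic w := by ext x; simp [hUdef, mem_Ici]
        rw [this]
        exact isClosed_Ici.inter (IsClosed.preimage hFc isClosed_Iic)
      have hUne : U.Nonempty := by
        obtain ⟨x, hx1, hx2⟩ := htend w hw
        exact ⟨x, hx1, hx2⟩
      have hUbdd : BddBelow U := ⟨t, fun x hx => hx.1⟩
      set a : ℝ := sInf U with hadef
      have haU : a ∈ U := hUclosed.csInf_mem hUne hUbdd
      have hta : t ≤ a := haU.1
      have hFa : F a ≤ w := haU.2
      have hsub1 : Ioi a ⊆ Ioi t ∩ F ⁻¹' Iic w := by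
        intro x hx
        exact ⟨lt_of_le_of_lt hta hx, le_trans (hanti (le_of_lt hx)) hFa⟩
      have hsub2 : Ioi t ∩ F ⁻¹' Iic w ⊆ Ici a := by
        intro x hx
        exact csInf_le hUbdd ⟨le_of_lt hx.1, hx.2⟩
      have h1 : F a ≤ ∫ x in Ioi t ∩ F ⁻¹' Iic w, f x := by
        show (∫ x in Ioi a, f x) ≤ _
        exact setIntegral_mono_set hf_int.integrableOn
          (Eventually.of_forall hf_nonneg) hsub1.eventuallyLE
      have h2 : (∫ x in Ioi t ∩ F ⁻¹' Iic w, f x) ≤ F a := by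
        have : (∫ x in Ici a, f x) = F a := integral_Ici_eq_integral_Ioi
        rw [← this]
        exact setIntegral_mono_set hf_int.integrableOn
          (Eventually.of_forall hf_nonneg) hsub2.eventuallyLE
      have hFaw : F a = w := by
        rcases hta.eq_or_lt with heq | hlt
        · refine le_antisymm hFa ?_
          rw [← heq]
          exact hwc
        · refine le_antisymm hFa ?_
          have hlow : ∀ x ∈ Ioo t a, w ≤ F x := by
            intro x hx
            by_contra hcon
            have hxU : x ∈ U := ⟨le_of_lt hx.1, le_of_not_ge hcon⟩
            exact absurd (csInf_le hUbdd hxU) (not_le.2 hx.2)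
          have htnd : Tendsto F (nhdsWithin a (Iio a)) (𝓝 (F a)) :=
            (hFc.tendsto a).mono_left nhdsWithin_le_nhds
          exact ge_of_tendsto htnd
            (eventually_of_mem (Ioo_mem_nhdsLT hlt) hlow)
      linarith [le_antisymm h2 h1]
  -- pushforward measure
  set ν : Measure ℝ := (volume.withDensity fun x => ENNReal.ofReal (f x)).restrict (Ioi t)
    with hνdef
  have hν_apply : ∀ s : Set ℝ, MeasurableSet s →
      ν s = ENNReal.ofReal (∫ x in Ioi t ∩ s, f x) := by
    intro s hs
    rw [hνdef, Measure.restrict_apply hs,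
      withDensity_apply _ (hs.inter measurableSet_Ioi),
      ← ofReal_integral_eq_lintegral_ofReal hf_int.integrableOn
        (Eventually.of_forall hf_nonneg), inter_comm]
  haveI hνfin : IsFiniteMeasure ν := by
    constructor
    rw [hν_apply univ MeasurableSet.univ]
    exact ENNReal.ofReal_lt_top
  have hmap : ν.map F = volume.restrict (Ioc 0 c) := by
    refine Measure.ext_of_Ioc' _ _ (fun u v huv => ?_) (fun u v huv => ?_)
    · rw [Measure.map_apply hFc.measurable measurableSet_Ioc]
      exact (measure_lt_top ν _).ne
    · rw [Measure.map_apply hFc.measurable measurableSet_Ioc,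
        Measure.restrict_apply measurableSet_Ioc, hν_apply _ (hFc.measurable measurableSet_Ioc),
        Ioc_inter_Ioc, Real.volume_Ioc]
      set u' : ℝ := u ⊔ 0 with hu'def
      set v' : ℝ := v ⊓ c with hv'def
      rcases lt_or_ge u' v' with hcase | hcase
      · have hu'0 : (0:ℝ) ≤ u' := le_sup_right
        have hv'c : v' ≤ c := inf_le_right
        have hu'c : u' ≤ c := le_of_lt (lt_of_lt_of_le hcase hv'c)
        have hv'0 : (0:ℝ) ≤ v' := le_trans hu'0 (le_of_lt hcase)
        have hseteq : Ioi t ∩ F ⁻¹' Ioc u v =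
            (Ioi t ∩ F ⁻¹' Iic v') \ (Ioi t ∩ F ⁻¹' Iic u') := by
          ext x
          simp only [mem_inter_iff, mem_Ioi, mem_preimage, mem_Ioc, mem_Iic, mem_diff,
            not_and, not_le]
          constructor
          · rintro ⟨hx, hux, hxv⟩
            have hxc : F x ≤ c := hanti (le_of_lt hx)
            exact ⟨⟨hx, le_inf hxv hxc⟩, fun _ => sup_lt_iff.2 ⟨hux, hFpos' x⟩⟩
          · rintro ⟨⟨hx, hxv⟩, h2⟩
            have hu'x : u' < F x := h2 hx
            exact ⟨hx, lt_of_le_of_lt le_sup_left hu'x, le_trans hxv inf_le_left⟩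
        have hsub : Ioi t ∩ F ⁻¹' Iic u' ⊆ Ioi t ∩ F ⁻¹' Iic v' := by
          intro x hx
          exact ⟨hx.1, le_trans hx.2 (le_of_lt hcase)⟩
        rw [hseteq, integral_diff (measurableSet_Ioi.inter (hFc.measurable measurableSet_Iic))
          hf_int.integrableOn hsub, hm v' hv'0 hv'c, hm u' hu'0 hu'c]
      · have hempty : Ioi t ∩ F ⁻¹' Ioc u v = ∅ := by
          ext x
          simp only [mem_inter_iff, mem_Ioi, mem_preimage, mem_Ioc, mem_empty_iff_false,
            iff_false, not_and]
          intro hx hux hxv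
          have hxc : F x ≤ c := hanti (le_of_lt hx)
          have h1 : u' < F x := sup_lt_iff.2 ⟨hux, hFpos' x⟩
          have h2 : F x ≤ v' := le_inf hxv hxc
          exact absurd (lt_of_lt_of_le h1 (le_trans h2 hcase)) (lt_irrefl _)
        rw [hempty, setIntegral_empty, ENNReal.ofReal_zero]
        exact (ENNReal.ofReal_eq_zero.2 (by linarith)).symm
  -- change of variables
  have hGmeas : Measurable fun u : ℝ => γ * u ^ (γ - 1) :=
    (measurable_id.pow_const (γ - 1)).const_mul γ
  have hrpow : ∫ u in Ioc (0:ℝ) c, γ * u ^ (γ - 1) = c ^ γ := by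
    rw [← intervalIntegral.integral_of_le hc.le, intervalIntegral.integral_const_mul,
      integral_rpow (Or.inl (by linarith : (-1:ℝ) < γ - 1))]
    rw [show γ - 1 + 1 = γ by ring, Real.zero_rpow hγ.ne']
    field_simp
    simp
  have h2 : ∫ u, γ * u ^ (γ - 1) ∂(ν.map F) = ∫ x, γ * (F x) ^ (γ - 1) ∂ν :=
    integral_map hFc.measurable.aemeasurable hGmeas.aestronglyMeasurable
  have h3 : ∫ x, γ * (F x) ^ (γ - 1) ∂ν = ∫ x in Ioi t, f x * (γ * (F x) ^ (γ - 1)) := by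
    rw [hνdef, restrict_withDensity measurableSet_Ioi]
    have heq : (fun x : ℝ => ENNReal.ofReal (f x))
        = fun x : ℝ => ((Real.toNNReal (f x) : ℝ≥0) : ℝ≥0∞) := rfl
    rw [heq, integral_withDensity_eq_integral_smul hf_meas.real_toNNReal]
    refine integral_congr_ae (Eventually.of_forall fun x => ?_)
    simp [NNReal.smul_def, Real.coe_toNNReal _ (hf_nonneg x)]
  calc ∫ x in Ioi t, γ * f x * (F x) ^ (γ - 1)
      = ∫ x in Ioi t, f x * (γ * (F x) ^ (γ - 1)) := by
        refine integral_congr_ae (Eventually.of_forall fun x => ?_); ring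
    _ = ∫ u, γ * u ^ (γ - 1) ∂(ν.map F) := by rw [h2, h3]
    _ = ∫ u in Ioc (0:ℝ) c, γ * u ^ (γ - 1) := by rw [hmap]
    _ = c ^ γ := hrpow

/-- under the PHR model,
`J^w(X,Y;t) ≥ −(γ/(2F̄(t)))∫_t^∞ x λ_F(x) f(x) dx`. -/
theorem weighted_residual_inaccuracy_hazard_density_lower_bound
    (f g : ℝ → ℝ) (γ : ℝ) (hγ : 0 < γ)
    (hf_meas : Measurable f) (hg_meas : Measurable g)
    (hf_nonneg : ∀ x, 0 ≤ f x) (hg_nonneg : ∀ x, 0 ≤ g x)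
    (hf_zero : ∀ x < 0, f x = 0) (hg_zero : ∀ x < 0, g x = 0)
    (hf_one : ∫ x, f x = 1) (hg_one : ∫ x, g x = 1)
    (hFpos : ∀ x ≥ (0 : ℝ), 0 < ∫ y in Ioi x, f y)
    (hphr : ∀ x ≥ (0 : ℝ), g x = γ * f x * (∫ y in Ioi x, f y) ^ (γ - 1))
    (t : ℝ) (ht : 0 ≤ t)
    (hfin : IntegrableOn
      (fun x => x * (f x / (∫ y in Ioi x, f y)) * f x) (Ioi t)) :
    -(1 / 2) * ∫ x in Ioi t,
        x * f x * g x / ((∫ y in Ioi t, f y) * (∫ y in Ioi t, g y))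
      ≥ -(γ / (2 * (∫ y in Ioi t, f y))) *
          ∫ x in Ioi t, x * (f x / (∫ y in Ioi x, f y)) * f x := by
  set F : ℝ → ℝ := fun x => ∫ y in Ioi x, f y with hFdef
  set c : ℝ := ∫ y in Ioi t, f y with hcdef
  have hc : 0 < c := hFpos t ht
  have hf_int : Integrable f := by
    by_contra h
    rw [integral_undef h] at hf_one; norm_num at hf_one
  have hanti : ∀ x, t ≤ x → F x ≤ c := by
    intro x hx
    rw [hcdef]
    exact setIntegral_mono_set hf_int.integrableOn
      (Filter.Eventually.of_forall hf_nonneg) (Ioi_subset_Ioi hx).eventuallyLE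
  have hGt : (∫ y in Ioi t, g y) = c ^ γ := by
    have h1 : ∫ y in Ioi t, g y = ∫ y in Ioi t, γ * f y * (F y) ^ (γ - 1) := by
      refine setIntegral_congr_fun measurableSet_Ioi fun x hx => ?_
      exact hphr x (le_of_lt (lt_of_le_of_lt ht hx))
    rw [h1]
    exact phr_surv_integral f hf_meas hf_nonneg hf_one hFpos γ hγ t ht
  set J : ℝ := ∫ x in Ioi t, x * (f x / F x) * f x with hJdef
  have hJ0 : 0 ≤ J := by
    refine setIntegral_nonneg measurableSet_Ioi fun x hx => ?_
    have hx0 : 0 ≤ x := le_of_lt (lt_of_le_of_lt ht hx)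
    have h1 : 0 ≤ f x / F x := div_nonneg (hf_nonneg x) (le_of_lt (hFpos x hx0))
    exact mul_nonneg (mul_nonneg hx0 h1) (hf_nonneg x)
  have key_ineq : (∫ x in Ioi t, x * f x * g x / (c * ∫ y in Ioi t, g y))
      ≤ (γ / c) * J := by
    rw [hGt]
    have hpt : ∀ x ∈ Ioi t, x * f x * g x / (c * c ^ γ)
        ≤ (γ / c) * (x * (f x / F x) * f x) := by
      intro x hx
      have hx0 : 0 < x := lt_of_le_of_lt ht hx
      have hFx : 0 < F x := hFpos x hx0.le
      have hg' : g x = γ * f x * (F x) ^ (γ - 1) := hphr x hx0.le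
      have hA : 0 ≤ x * f x * f x * γ :=
        mul_nonneg (mul_nonneg (mul_nonneg hx0.le (hf_nonneg x)) (hf_nonneg x)) hγ.le
      have hdiv : (F x) ^ (γ - 1) / (c * c ^ γ) ≤ 1 / (F x * c) := by
        rw [div_le_div_iff₀ (mul_pos hc (Real.rpow_pos_of_pos hc γ)) (mul_pos hFx hc)]
        have hpow : (F x) ^ (γ - 1) * F x = (F x) ^ γ := by
          have hg1 : γ - 1 + 1 = γ := by ring
          rw [← hg1, Real.rpow_add_one hFx.ne' (γ - 1), hg1]
        have hple : (F x) ^ γ ≤ c ^ γ :=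
          Real.rpow_le_rpow hFx.le (hanti x (le_of_lt hx)) hγ.le
        calc (F x) ^ (γ - 1) * (F x * c) = ((F x) ^ (γ - 1) * F x) * c := by ring
          _ = (F x) ^ γ * c := by rw [hpow]
          _ ≤ c ^ γ * c := mul_le_mul_of_nonneg_right hple hc.le
          _ = 1 * (c * c ^ γ) := by ring
      calc x * f x * g x / (c * c ^ γ)
          = (x * f x * f x * γ) * ((F x) ^ (γ - 1) / (c * c ^ γ)) := by
            rw [hg']; ring
        _ ≤ (x * f x * f x * γ) * (1 / (F x * c)) :=
            mul_le_mul_of_nonneg_left hdiv hA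
        _ = (γ / c) * (x * (f x / F x) * f x) := by
            field_simp
    by_cases hI : IntegrableOn (fun x => x * f x * g x / (c * c ^ γ)) (Ioi t)
    · have := setIntegral_mono_on hI (hfin.const_mul (γ / c)) measurableSet_Ioi hpt
      rwa [integral_const_mul] at this
    · rw [integral_undef hI]
      exact mul_nonneg (div_nonneg hγ.le hc.le) hJ0
  have hle : (1:ℝ)/2 * (∫ x in Ioi t, x * f x * g x / (c * ∫ y in Ioi t, g y))
      ≤ γ / (2 * c) * J := by
    have h2 : γ / (2 * c) * J = 1/2 * ((γ / c) * J) := by ring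
    rw [h2]
    linarith
  linarith
end
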